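/- Let T be a positive semi-definite self-adjoint bounded operator on a real Hilbert space H, let v ∈ H, let h ≠ 0 be an eigenvector of T with eigenvalue r > 0, and let h̃ = (⟨h,v⟩/‖h‖²)·h be the projection of v onto the span of h. Then for every n ≥ 1, ⟨v, T^{n-1} v⟩ ≥ ⟨h̃, T^{n-1} h̃⟩ = r^{n-1} ⟨h,v⟩²/‖h‖². -/

import Mathlib

private lemma pow_symm {H : Type*} [NormedAddCommGroup H] [InnerProductSpace ℝ H]
    [CompleteSpace H] (T : H →L[ℝ] H) (hT : IsSelfAdjoint T) (m : ℕ) (x y : H) :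
    inner (𝕜 := ℝ) ((T ^ m) x) y = inner (𝕜 := ℝ) x ((T ^ m) y) :=
  (ContinuousLinearMap.isSelfAdjoint_iff_isSymmetric.mp (hT.pow m)) x y

private lemma pow_pos' {H : Type*} [NormedAddCommGroup H] [InnerProductSpace ℝ H]
    [CompleteSpace H] (T : H →L[ℝ] H) (hT : IsSelfAdjoint T)
    (hpos : ∀ x : H, 0 ≤ inner (𝕜 := ℝ) (T x) x) (m : ℕ) (x : H) :
    0 ≤ inner (𝕜 := ℝ) ((T ^ m) x) x := by
  rcases Nat.even_or_odd m with ⟨k, hk⟩ | ⟨k, hk⟩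
  · have : (T ^ m) x = (T ^ k) ((T ^ k) x) := by rw [hk, pow_add]; rfl
    rw [this, pow_symm T hT]
    exact real_inner_self_nonneg
  · have h1 : m = k + 1 + k := by omega
    have : (T ^ m) x = (T ^ k) (T ((T ^ k) x)) := by rw [h1, pow_add, pow_succ]; rfl
    rw [this, pow_symm T hT]
    exact hpos _

theorem stmt_11 {H : Type*} [NormedAddCommGroup H] [InnerProductSpace ℝ H]
    [CompleteSpace H]
    (T : H →L[ℝ] H) (hT : IsSelfAdjoint T)
    (hpos : ∀ x : H, 0 ≤ inner (𝕜 := ℝ) (T x) x)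
    (v h : H) (hh : h ≠ 0) (r : ℝ) (hr : 0 < r) (heig : T h = r • h)
    (n : ℕ) (hn : 1 ≤ n) :
    inner (𝕜 := ℝ) ((T ^ (n - 1)) ((inner (𝕜 := ℝ) h v / ‖h‖ ^ 2) • h))
        ((inner (𝕜 := ℝ) h v / ‖h‖ ^ 2) • h)
      = r ^ (n - 1) * (inner (𝕜 := ℝ) h v) ^ 2 / ‖h‖ ^ 2 ∧
    r ^ (n - 1) * (inner (𝕜 := ℝ) h v) ^ 2 / ‖h‖ ^ 2 ≤
      inner (𝕜 := ℝ) v ((T ^ (n - 1)) v) := by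
  set m := n - 1 with hm
  set c : ℝ := inner (𝕜 := ℝ) h v / ‖h‖ ^ 2 with hc
  have hh2 : (‖h‖ : ℝ) ^ 2 ≠ 0 := pow_ne_zero _ (norm_ne_zero_iff.mpr hh)
  have hpowh : (T ^ m) h = (r ^ m) • h := by
    induction m with
    | zero => simp
    | succ k ih =>
      rw [pow_succ, ContinuousLinearMap.mul_apply, heig, map_smul, ih, smul_smul, pow_succ]
      ring_nf
  have hinner_h : inner (𝕜 := ℝ) h h = ‖h‖ ^ 2 := real_inner_self_eq_norm_sq h
  have key1 : inner (𝕜 := ℝ) ((T ^ m) (c • h)) (c • h)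
      = r ^ m * (inner (𝕜 := ℝ) h v) ^ 2 / ‖h‖ ^ 2 := by
    rw [map_smul, hpowh, smul_smul, real_inner_smul_left, real_inner_smul_right, hinner_h, hc]
    field_simp
  refine ⟨key1, ?_⟩
  have horth : inner (𝕜 := ℝ) h (v - c • h) = 0 := by
    rw [inner_sub_right, real_inner_smul_right, hinner_h, hc]
    field_simp
    ring
  set w := v - c • h with hw
  have hcross : inner (𝕜 := ℝ) ((T ^ m) (c • h)) w = 0 := by
    rw [map_smul, hpowh, smul_smul, real_inner_smul_left, horth, mul_zero]
  have hcross2 : inner (𝕜 := ℝ) ((T ^ m) w) (c • h) = 0 := by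
    rw [pow_symm T hT, real_inner_comm, hcross]
  have hvdecomp : v = w + c • h := by rw [hw]; abel
  have hexp : inner (𝕜 := ℝ) v ((T ^ m) v)
      = inner (𝕜 := ℝ) ((T ^ m) w) w + inner (𝕜 := ℝ) ((T ^ m) (c • h)) (c • h) := by
    conv_lhs => rw [hvdecomp]
    rw [← pow_symm T hT, map_add, inner_add_left, inner_add_right, inner_add_right,
      hcross, hcross2]
    ring
  rw [hexp, ← key1]
  have := pow_pos' T hT hpos m w
  linarith
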